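/- With the ReLU kernel map h₂ as above (assuming σᵢ > 0), h₂ is strictly convex on [0,a): its second derivative is h₂''(x) = σᵣ⁴ / (2π√((σᵣ²a + σᵢ²)² − (σᵣ²x + σᵢ²)²)) > 0 for x ∈ [0,a). -/

import Mathlib

open Real Set

theorem stmt_15 (σr σi : ℝ) (hr : 0 < σr) (hr2 : σr ^ 2 < 2) (hi : 0 < σi)
    (a : ℝ) (ha : a = σi ^ 2 / (2 - σr ^ 2))
    (h₂ : ℝ → ℝ)
    (hdef : ∀ x, h₂ x = 1 / (2 * π) *
      ((σr ^ 2 * x + σi ^ 2) *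
          Real.arccos (-((σr ^ 2 * x + σi ^ 2) / (σr ^ 2 * a + σi ^ 2))) +
        Real.sqrt ((σr ^ 2 * a + σi ^ 2) ^ 2 - (σr ^ 2 * x + σi ^ 2) ^ 2))) :
    (∀ x ∈ Set.Ico (0 : ℝ) a,
      deriv (deriv h₂) x =
        σr ^ 4 /
          (2 * π * Real.sqrt ((σr ^ 2 * a + σi ^ 2) ^ 2 - (σr ^ 2 * x + σi ^ 2) ^ 2)) ∧
      0 < deriv (deriv h₂) x) ∧
    StrictConvexOn ℝ (Set.Ico (0 : ℝ) a) h₂ := by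
  have hπ : 0 < π := Real.pi_pos
  have ha0 : 0 < a := by
    rw [ha]
    have h2 : 0 < 2 - σr ^ 2 := by linarith
    positivity
  set c := σr ^ 2 * a + σi ^ 2 with hc
  have hc0 : 0 < c := by positivity
  have hcu : Continuous fun y : ℝ => σr ^ 2 * y + σi ^ 2 :=
    (continuous_const.mul continuous_id).add continuous_const
  set S : Set ℝ := (fun x => σr ^ 2 * x + σi ^ 2) ⁻¹' Set.Ioo (-c) c with hS
  have hSopen : IsOpen S := isOpen_Ioo.preimage hcu
  have hmemS : ∀ x ∈ Set.Ico (0 : ℝ) a, x ∈ S := by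
    intro x hx
    have h1 : 0 ≤ σr ^ 2 * x := mul_nonneg (sq_nonneg σr) hx.1
    have h2 : σr ^ 2 * x < σr ^ 2 * a := mul_lt_mul_of_pos_left hx.2 (pow_pos hr 2)
    have h3 : 0 < σi ^ 2 := pow_pos hi 2
    refine ⟨?_, ?_⟩
    · simp only [hS, Set.mem_preimage]
      linarith
    · simp only [hS, Set.mem_preimage]
      rw [hc]
      linarith
  have hu : ∀ x : ℝ, HasDerivAt (fun y => σr ^ 2 * y + σi ^ 2) (σr ^ 2) x := by
    intro x
    simpa using ((hasDerivAt_id x).const_mul (σr ^ 2)).add_const (σi ^ 2)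
  -- function form of h₂
  have hfun : h₂ = fun y => 1 / (2 * π) *
      ((σr ^ 2 * y + σi ^ 2) * Real.arccos (-((σr ^ 2 * y + σi ^ 2) / c)) +
        Real.sqrt (c ^ 2 - (σr ^ 2 * y + σi ^ 2) ^ 2)) := by
    funext y; exact hdef y
  -- first derivative on S
  have key : ∀ x ∈ S, HasDerivAt h₂
      (σr ^ 2 / (2 * π) * Real.arccos (-((σr ^ 2 * x + σi ^ 2) / c))) x := by
    intro x hx
    obtain ⟨hx1, hx2⟩ := hx
    set u := σr ^ 2 * x + σi ^ 2 with hu'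
    have hs0 : 0 < c ^ 2 - u ^ 2 := by nlinarith
    have hs : 0 < Real.sqrt (c ^ 2 - u ^ 2) := Real.sqrt_pos.2 hs0
    have hv1 : -(u / c) ≠ -1 := by
      intro h
      have : u / c = 1 := by linarith
      have : u = c := by field_simp at this; linarith
      linarith
    have hv2 : -(u / c) ≠ 1 := by
      intro h
      have : u / c = -1 := by linarith
      have : u = -c := by field_simp at this; linarith
      linarith
    have hsq : Real.sqrt (1 - (-(u / c)) ^ 2) = Real.sqrt (c ^ 2 - u ^ 2) / c := by
      rw [show 1 - (-(u / c)) ^ 2 = (c ^ 2 - u ^ 2) / c ^ 2 by field_simp,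
        Real.sqrt_div hs0.le, Real.sqrt_sq hc0.le]
    have hv : HasDerivAt (fun y => -((σr ^ 2 * y + σi ^ 2) / c)) (-(σr ^ 2 / c)) x :=
      ((hu x).div_const c).neg
    have harc : HasDerivAt (fun y => Real.arccos (-((σr ^ 2 * y + σi ^ 2) / c)))
        (-(1 / Real.sqrt (1 - (-(u / c)) ^ 2)) * -(σr ^ 2 / c)) x := by
      have := (Real.hasDerivAt_arccos hv1 hv2).comp x hv
      simpa [Function.comp_def] using this
    have hw : HasDerivAt (fun y => c ^ 2 - (σr ^ 2 * y + σi ^ 2) ^ 2)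
        (-((2 : ℕ) * u ^ 1 * σr ^ 2)) x := ((hu x).pow 2).const_sub (c ^ 2)
    have hsqrt : HasDerivAt (fun y => Real.sqrt (c ^ 2 - (σr ^ 2 * y + σi ^ 2) ^ 2))
        (-((2 : ℕ) * u ^ 1 * σr ^ 2) / (2 * Real.sqrt (c ^ 2 - u ^ 2))) x :=
      hw.sqrt (ne_of_gt hs0)
    have hsum := (((hu x).mul harc).add hsqrt).const_mul (1 / (2 * π))
    rw [hfun]
    refine HasDerivAt.congr_deriv hsum ?_
    rw [hsq]
    have hsne : Real.sqrt (c ^ 2 - u ^ 2) ≠ 0 := ne_of_gt hs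
    field_simp
    ring
  -- second derivative on S
  have key2 : ∀ x ∈ S, HasDerivAt
      (fun y => σr ^ 2 / (2 * π) * Real.arccos (-((σr ^ 2 * y + σi ^ 2) / c)))
      (σr ^ 4 / (2 * π * Real.sqrt (c ^ 2 - (σr ^ 2 * x + σi ^ 2) ^ 2))) x := by
    intro x hx
    obtain ⟨hx1, hx2⟩ := hx
    set u := σr ^ 2 * x + σi ^ 2 with hu'
    have hs0 : 0 < c ^ 2 - u ^ 2 := by nlinarith
    have hs : 0 < Real.sqrt (c ^ 2 - u ^ 2) := Real.sqrt_pos.2 hs0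
    have hv1 : -(u / c) ≠ -1 := by
      intro h
      have : u / c = 1 := by linarith
      have : u = c := by field_simp at this; linarith
      linarith
    have hv2 : -(u / c) ≠ 1 := by
      intro h
      have : u / c = -1 := by linarith
      have : u = -c := by field_simp at this; linarith
      linarith
    have hsq : Real.sqrt (1 - (-(u / c)) ^ 2) = Real.sqrt (c ^ 2 - u ^ 2) / c := by
      rw [show 1 - (-(u / c)) ^ 2 = (c ^ 2 - u ^ 2) / c ^ 2 by field_simp,
        Real.sqrt_div hs0.le, Real.sqrt_sq hc0.le]
    have hv : HasDerivAt (fun y => -((σr ^ 2 * y + σi ^ 2) / c)) (-(σr ^ 2 / c)) x :=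
      ((hu x).div_const c).neg
    have harc : HasDerivAt (fun y => Real.arccos (-((σr ^ 2 * y + σi ^ 2) / c)))
        (-(1 / Real.sqrt (1 - (-(u / c)) ^ 2)) * -(σr ^ 2 / c)) x := by
      have := (Real.hasDerivAt_arccos hv1 hv2).comp x hv
      simpa [Function.comp_def] using this
    have := harc.const_mul (σr ^ 2 / (2 * π))
    refine HasDerivAt.congr_deriv this ?_
    rw [hsq]
    have hsne : Real.sqrt (c ^ 2 - u ^ 2) ≠ 0 := ne_of_gt hs
    field_simp
  have hderiv_eq : ∀ x ∈ S, deriv h₂ x =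
      σr ^ 2 / (2 * π) * Real.arccos (-((σr ^ 2 * x + σi ^ 2) / c)) :=
    fun x hx => (key x hx).deriv
  have hd2 : ∀ x ∈ S, deriv (deriv h₂) x =
      σr ^ 4 / (2 * π * Real.sqrt (c ^ 2 - (σr ^ 2 * x + σi ^ 2) ^ 2)) := by
    intro x hx
    have hev : deriv h₂ =ᶠ[nhds x]
        fun y => σr ^ 2 / (2 * π) * Real.arccos (-((σr ^ 2 * y + σi ^ 2) / c)) := by
      filter_upwards [hSopen.mem_nhds hx] with y hy using hderiv_eq y hy
    rw [hev.deriv_eq]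
    exact (key2 x hx).deriv
  have hpos : ∀ x ∈ S, 0 < deriv (deriv h₂) x := by
    intro x hx
    rw [hd2 x hx]
    have hx1 : -c < σr ^ 2 * x + σi ^ 2 := hx.1
    have hx2 : σr ^ 2 * x + σi ^ 2 < c := hx.2
    have hs0 : 0 < c ^ 2 - (σr ^ 2 * x + σi ^ 2) ^ 2 := by nlinarith
    have hs : 0 < Real.sqrt (c ^ 2 - (σr ^ 2 * x + σi ^ 2) ^ 2) := Real.sqrt_pos.2 hs0
    positivity
  constructor
  · intro x hx
    exact ⟨hd2 x (hmemS x hx), hpos x (hmemS x hx)⟩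
  · apply strictConvexOn_of_deriv2_pos (convex_Ico 0 a)
    · rw [hfun]
      apply Continuous.continuousOn
      apply continuous_const.mul
      apply Continuous.add
      · exact hcu.mul (Real.continuous_arccos.comp ((hcu.div_const c).neg))
      · exact Real.continuous_sqrt.comp (continuous_const.sub (hcu.pow 2))
    · intro x hx
      rw [interior_Ico] at hx
      have hx' : x ∈ Set.Ico (0 : ℝ) a := ⟨hx.1.le, hx.2⟩
      show 0 < deriv (deriv h₂) x
      exact hpos x (hmemS x hx')
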